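/- Let p : E ⥤ B and q : D ⥤ B be Grothendieck fibrations and let G : E ⥤ D be a functor with G ⋙ q = p. Then the following are equivalent: (1) there exist a functor L : D ⥤ E and an adjunction L ⊣ G such that q sends every component of the unit of this adjunction to an isomorphism of B; (2) G sends strongly cartesian morphisms of E to strongly cartesian morphisms of D, and for every object b of B the functor induced by G on fiber categories E_b ⥤ D_b admits a left adjoint. -/

import Mathlib

open CategoryTheory Functor

universe v₁ v₂ v₃ u₁ u₂ u₃

variable {B : Type u₁} {E : Type u₂} {D : Type u₃}
  [Category.{v₁} B] [Category.{v₂} E] [Category.{v₃} D]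

/-- A functor `G : E ⥤ D` with `G ⋙ q = p` restricts to a functor on fiber categories
`E_b ⥤ D_b` for every `b : B`. -/
def fiberFunctorOfEq {p : E ⥤ B} {q : D ⥤ B} (G : E ⥤ D) (hG : G ⋙ q = p) (b : B) :
    p.Fiber b ⥤ q.Fiber b :=
  Fiber.inducedFunctor (F := Fiber.fiberInclusion ⋙ G)
    (by rw [Functor.assoc, hG]; exact Fiber.fiberInclusion_comp_eq_const)

namespace RelAdjAux

open CategoryTheory.IsHomLift

variable {B : Type u₁} {E : Type u₂} {D : Type u₃}
  [Category.{v₁} B] [Category.{v₂} E] [Category.{v₃} D]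

/-- transport a hom-lift along an equality of base morphisms -/
lemma lift_congr (p : E ⥤ B) {R S : B} {f g : R ⟶ S} {a b : E} (φ : a ⟶ b)
    [p.IsHomLift f φ] (h : f = g) : p.IsHomLift g φ := h ▸ ‹p.IsHomLift f φ›

lemma comp_lift_of_lift (G : E ⥤ D) (q : D ⥤ B) {R S : B} (f : R ⟶ S) {a b : E} (φ : a ⟶ b)
    [(G ⋙ q).IsHomLift f φ] : q.IsHomLift f (G.map φ) :=
  of_fac' q f (G.map φ) (domain_eq (G ⋙ q) f φ) (codomain_eq (G ⋙ q) f φ)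
    (fac' (G ⋙ q) f φ)

lemma lift_of_comp_lift (G : E ⥤ D) (q : D ⥤ B) {R S : B} (f : R ⟶ S) {a b : E} (φ : a ⟶ b)
    [q.IsHomLift f (G.map φ)] : (G ⋙ q).IsHomLift f φ :=
  of_fac' (G ⋙ q) f φ (domain_eq q f (G.map φ)) (codomain_eq q f (G.map φ))
    (fac' q f (G.map φ))

lemma lift_id_of_lift_eqToHom (p : E ⥤ B) {S : B} {a b : E} (h : p.obj a = S) (φ : a ⟶ b)
    [p.IsHomLift (eqToHom h) φ] : p.IsHomLift (𝟙 S) φ := by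
  apply of_fac' p _ φ h (codomain_eq p (eqToHom h) φ)
  rw [fac' p (eqToHom h) φ]
  simp

lemma lift_eqToHom_of_lift_id (p : E ⥤ B) {S : B} {a b : E} (φ : a ⟶ b)
    [p.IsHomLift (𝟙 S) φ] (h : p.obj a = S) : p.IsHomLift (eqToHom h) φ := by
  apply of_fac' p _ φ rfl (codomain_eq p (𝟙 S) φ)
  rw [fac' p (𝟙 S) φ]
  simp

lemma isIso_map_of_lift_id (p : E ⥤ B) {S : B} {a b : E} (φ : a ⟶ b)
    [p.IsHomLift (𝟙 S) φ] : IsIso (p.map φ) := by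
  rw [fac' p (𝟙 S) φ]
  infer_instance

lemma lift_inv (p : E ⥤ B) {R S : B} (f : R ⟶ S) {a b : E} (φ : a ⟶ b)
    [p.IsHomLift f φ] [IsIso f] [IsIso φ] : p.IsHomLift (inv f) (inv φ) := by
  haveI : p.IsHomLift (asIso f).hom (asIso φ).hom := by simpa
  have := IsHomLift.inv_lift_inv p (asIso f) (asIso φ)
  simpa using this

/-- cancellation: if `φ` lifts an isomorphism `f` and `φ ≫ ψ` lifts `h`, then `ψ` lifts
`inv f ≫ h`. -/
lemma lift_cancel (p : E ⥤ B) {R S T : B} (f : R ⟶ S) (h : R ⟶ T) {a b c : E}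
    (φ : a ⟶ b) (ψ : b ⟶ c) [p.IsHomLift f φ] [IsIso f] [p.IsHomLift h (φ ≫ ψ)] :
    p.IsHomLift (inv f ≫ h) ψ := by
  have ha : p.obj a = R := domain_eq p f φ
  have hb : p.obj b = S := codomain_eq p f φ
  have hc : p.obj c = T := codomain_eq p h (φ ≫ ψ)
  apply of_fac' p _ ψ hb hc
  have h1 : p.map φ = eqToHom ha ≫ f ≫ eqToHom hb.symm := fac' p f φ
  have h2 : p.map φ ≫ p.map ψ = eqToHom ha ≫ h ≫ eqToHom hc.symm := by
    rw [← p.map_comp]; exact fac' p h (φ ≫ ψ)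
  calc p.map ψ = eqToHom hb ≫ inv f ≫ eqToHom ha.symm ≫ (p.map φ ≫ p.map ψ) := by
        rw [h1]; simp
    _ = eqToHom hb ≫ (inv f ≫ h) ≫ eqToHom hc.symm := by rw [h2]; simp

lemma preserves_cartesian (q : D ⥤ B) (G : E ⥤ D) (L : D ⥤ E) (adj : L ⊣ G)
    (hiso : ∀ d : D, IsIso (q.map (adj.unit.app d)))
    {x y : E} {a b : B} (f : a ⟶ b) (φ : x ⟶ y) (hφ : (G ⋙ q).IsStronglyCartesian f φ) :
    q.IsStronglyCartesian f (G.map φ) := by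
  haveI := hφ
  haveI hlf : q.IsHomLift f (G.map φ) := comp_lift_of_lift G q f φ
  refine ⟨fun {z} g ψ hψ => ?_⟩
  haveI := hψ
  haveI := hiso z
  -- transpose ψ
  set ψs : L.obj z ⟶ y := (adj.homEquiv z y).symm ψ with hψs
  have hψdec : ψ = adj.unit.app z ≫ G.map ψs := by
    conv_lhs => rw [← (adj.homEquiv z y).apply_symm_apply ψ]
    rw [Adjunction.homEquiv_unit]
  -- ψs lifts (inv u ≫ g) ≫ f
  haveI h1 : q.IsHomLift (inv (q.map (adj.unit.app z)) ≫ g ≫ f) (G.map ψs) := by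
    haveI : q.IsHomLift (g ≫ f) (adj.unit.app z ≫ G.map ψs) := by
      rw [← hψdec]; infer_instance
    exact lift_cancel q (q.map (adj.unit.app z)) (g ≫ f) (adj.unit.app z) (G.map ψs)
  haveI h1' : (G ⋙ q).IsHomLift ((inv (q.map (adj.unit.app z)) ≫ g) ≫ f) ψs := by
    haveI := lift_of_comp_lift G q (inv (q.map (adj.unit.app z)) ≫ g ≫ f) ψs
    exact lift_congr (G ⋙ q) (f := inv (q.map (adj.unit.app z)) ≫ g ≫ f) ψs
      (Category.assoc _ _ _).symm
  -- factor through φ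
  set χ' := IsStronglyCartesian.map (G ⋙ q) f φ
    (rfl : (inv (q.map (adj.unit.app z)) ≫ g) ≫ f = (inv (q.map (adj.unit.app z)) ≫ g) ≫ f) ψs
    with hχ'
  haveI h2 : (G ⋙ q).IsHomLift (inv (q.map (adj.unit.app z)) ≫ g) χ' :=
    IsStronglyCartesian.map_isHomLift ..
  have h3 : χ' ≫ φ = ψs := IsStronglyCartesian.fac ..
  refine ⟨adj.unit.app z ≫ G.map χ', ⟨?_, ?_⟩, ?_⟩
  · haveI := comp_lift_of_lift G q (inv (q.map (adj.unit.app z)) ≫ g) χ'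
    haveI : q.IsHomLift (q.map (adj.unit.app z) ≫ inv (q.map (adj.unit.app z)) ≫ g)
        (adj.unit.app z ≫ G.map χ') := inferInstance
    exact lift_congr q (f := q.map (adj.unit.app z) ≫ inv (q.map (adj.unit.app z)) ≫ g) _
      (by simp)
  · rw [Category.assoc, ← G.map_comp, h3, ← hψdec]
  · rintro χ₂ ⟨hl₂, hfac₂⟩
    haveI := hl₂
    set χ₂' : L.obj z ⟶ x := (adj.homEquiv z x).symm χ₂ with hχ₂'
    have hdec₂ : χ₂ = adj.unit.app z ≫ G.map χ₂' := by
      conv_lhs => rw [← (adj.homEquiv z x).apply_symm_apply χ₂]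
      rw [Adjunction.homEquiv_unit]
    haveI h4 : q.IsHomLift (inv (q.map (adj.unit.app z)) ≫ g) (G.map χ₂') := by
      haveI : q.IsHomLift g (adj.unit.app z ≫ G.map χ₂') := by rw [← hdec₂]; infer_instance
      exact lift_cancel q (q.map (adj.unit.app z)) g (adj.unit.app z) (G.map χ₂')
    haveI h4' : (G ⋙ q).IsHomLift (inv (q.map (adj.unit.app z)) ≫ g) χ₂' :=
      lift_of_comp_lift G q _ χ₂'
    have h5 : χ₂' ≫ φ = ψs := by
      rw [hψs, ← hfac₂]
      exact (adj.homEquiv_naturality_right_symm χ₂ φ).symm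
    have h6 : χ₂' = χ' := IsStronglyCartesian.map_uniq (G ⋙ q) f φ rfl ψs χ₂' h5
    rw [hdec₂, h6]

lemma fiber_isRightAdjoint (q : D ⥤ B) (G : E ⥤ D)
    (hp : ∀ (y : E) (b : B) (f : b ⟶ (G ⋙ q).obj y),
      ∃ (x : E) (φ : x ⟶ y), (G ⋙ q).IsStronglyCartesian f φ)
    (L : D ⥤ E) (adj : L ⊣ G) (hiso : ∀ d, IsIso (q.map (adj.unit.app d))) (b : B) :
    (fiberFunctorOfEq G (rfl : G ⋙ q = G ⋙ q) b).IsRightAdjoint := by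
  choose xF φF hc using hp
  let fd : (d : Fiber q b) → (b ⟶ (G ⋙ q).obj (L.obj d.1)) :=
    fun d => eqToHom d.2.symm ≫ q.map (adj.unit.app d.1)
  have hfd : ∀ d : Fiber q b, IsIso (fd d) := fun d => by
    haveI := hiso d.1; simp only [fd]; infer_instance
  let xO : Fiber q b → E := fun d => xF (L.obj d.1) b (fd d)
  let φO : (d : Fiber q b) → (xO d ⟶ L.obj d.1) := fun d => φF (L.obj d.1) b (fd d)
  have hcart : ∀ d, (G ⋙ q).IsStronglyCartesian (fd d) (φO d) := fun d => hc _ _ _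
  have hIso : ∀ d, IsIso (φO d) := fun d => by
    haveI := hcart d; haveI := hfd d
    exact IsStronglyCartesian.isIso_of_base_isIso (G ⋙ q) (fd d) (φO d)
  have hunitlift : ∀ d : Fiber q b, q.IsHomLift (fd d) (adj.unit.app d.1) := fun d => by
    apply of_fac' q (fd d) (adj.unit.app d.1) d.2 rfl
    simp [fd]
  have hdom : ∀ d, (G ⋙ q).obj (xO d) = b := fun d => by
    haveI := hcart d; exact domain_eq (G ⋙ q) (fd d) (φO d)
  let Fo : Fiber q b → Fiber (G ⋙ q) b := fun d => Fiber.mk (hdom d)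
  let e : ∀ (d : Fiber q b) (Y : Fiber (G ⋙ q) b),
      (Fo d ⟶ Y) ≃ (d ⟶ (fiberFunctorOfEq G rfl b).obj Y) := fun d Y =>
    { toFun := fun χ => ⟨(adj.homEquiv d.1 Y.1) (inv (φO d) ≫ χ.1), by
        rw [Adjunction.homEquiv_unit]
        erw [G.map_comp]
        haveI := hcart d
        haveI := hIso d
        haveI := hfd d
        haveI h1 : (G ⋙ q).IsHomLift (inv (fd d)) (inv (φO d)) := lift_inv (G ⋙ q) (fd d) (φO d)
        haveI := comp_lift_of_lift G q (inv (fd d)) (inv (φO d))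
        haveI : (G ⋙ q).IsHomLift (𝟙 b) χ.1 := χ.2
        haveI := comp_lift_of_lift G q (𝟙 b) χ.1
        haveI := hunitlift d
        haveI : q.IsHomLift (fd d ≫ inv (fd d) ≫ 𝟙 b)
          (adj.unit.app d.1 ≫ G.map (inv (φO d)) ≫ G.map χ.1) :=
          @IsHomLift.comp _ _ _ _ q _ _ _ _ _ _ (fd d) (inv (fd d) ≫ 𝟙 b) (adj.unit.app d.1) _
            (hunitlift d) (@IsHomLift.comp _ _ _ _ q _ _ _ _ _ _ (inv (fd d)) (𝟙 b)
              (G.map (inv (φO d))) (G.map χ.1) (comp_lift_of_lift G q (inv (fd d)) (inv (φO d)))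
              (comp_lift_of_lift G q (𝟙 b) χ.1))
        exact @lift_congr _ _ _ _ q _ _ (fd d ≫ inv (fd d) ≫ 𝟙 b) _ _ _ _ this (by simp)⟩
      invFun := fun ψ => ⟨φO d ≫ (adj.homEquiv d.1 Y.1).symm ψ.1, by
        haveI := hcart d
        haveI := hfd d
        have hdecψ : ψ.1 = adj.unit.app d.1 ≫ G.map ((adj.homEquiv d.1 Y.1).symm ψ.1) := by
          conv_lhs => rw [← (adj.homEquiv d.1 Y.1).apply_symm_apply ψ.1]
          rw [Adjunction.homEquiv_unit]
        haveI : q.IsHomLift (𝟙 b)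
            (adj.unit.app d.1 ≫ G.map ((adj.homEquiv d.1 Y.1).symm ψ.1)) := by
          rw [← hdecψ]; exact ψ.2
        haveI := hunitlift d
        haveI h2 : q.IsHomLift (inv (fd d) ≫ 𝟙 b)
            (G.map ((adj.homEquiv d.1 Y.1).symm ψ.1)) :=
          lift_cancel q (fd d) (𝟙 b) (adj.unit.app d.1) _
        haveI := lift_of_comp_lift G q (inv (fd d) ≫ 𝟙 b) ((adj.homEquiv d.1 Y.1).symm ψ.1)
        haveI : (G ⋙ q).IsHomLift (fd d ≫ inv (fd d) ≫ 𝟙 b)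
            (φO d ≫ (adj.homEquiv d.1 Y.1).symm ψ.1) := inferInstance
        exact lift_congr (G ⋙ q) (f := fd d ≫ inv (fd d) ≫ 𝟙 b)
          (φO d ≫ (adj.homEquiv d.1 Y.1).symm ψ.1) (by simp)⟩
      left_inv := fun χ => by
        haveI := hIso d
        apply Subtype.ext
        simp
        exact @IsIso.hom_inv_id_assoc _ _ _ _ (φO d) (hIso d) _ _
      right_inv := fun ψ => by
        haveI := hIso d
        apply Subtype.ext
        simp
        exact Equiv.apply_symm_apply _ _ }
  have he : ∀ (X : Fiber q b) (Y Y' : Fiber (G ⋙ q) b) (g : Y ⟶ Y') (h : Fo X ⟶ Y),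
      e X Y' (h ≫ g) = e X Y h ≫ (fiberFunctorOfEq G rfl b).map g := by
    intro X Y Y' g h
    apply Subtype.ext
    show (adj.homEquiv X.1 Y'.1) (inv (φO X) ≫ (h.1 ≫ g.1)) =
      (adj.homEquiv X.1 Y.1) (inv (φO X) ≫ h.1) ≫ G.map g.1
    erw [← Category.assoc, Adjunction.homEquiv_naturality_right]
  exact ⟨⟨Adjunction.leftAdjointOfEquiv e he, ⟨Adjunction.adjunctionOfEquivLeft e he⟩⟩⟩

lemma exists_left_adjoint (q : D ⥤ B) (G : E ⥤ D)
    (hp : ∀ (y : E) (b : B) (f : b ⟶ (G ⋙ q).obj y),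
      ∃ (x : E) (φ : x ⟶ y), (G ⋙ q).IsStronglyCartesian f φ)
    (hpres : ∀ {x y : E} {a b : B} (f : a ⟶ b) (φ : x ⟶ y),
      (G ⋙ q).IsStronglyCartesian f φ → q.IsStronglyCartesian f (G.map φ))
    (hfib : ∀ b : B, (fiberFunctorOfEq G (rfl : G ⋙ q = G ⋙ q) b).IsRightAdjoint) :
    ∃ (L : D ⥤ E) (adj : L ⊣ G), ∀ d : D, IsIso (q.map (adj.unit.app d)) := by
  choose xF φF hc using hp
  have hfib' : ∀ bb, ∃ Lb : Fiber q bb ⥤ Fiber (G ⋙ q) bb,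
      Nonempty (Lb ⊣ fiberFunctorOfEq G (rfl : G ⋙ q = G ⋙ q) bb) := fun bb =>
    (hfib bb).exists_leftAdjoint
  choose Fb hadj using hfib'
  have adjb : ∀ bb, Fb bb ⊣ fiberFunctorOfEq G (rfl : G ⋙ q = G ⋙ q) bb :=
    fun bb => (hadj bb).some
  -- basic data
  let dbar : (d : D) → Fiber q (q.obj d) := fun d => Fiber.mk rfl
  let Fo : D → E := fun d => ((Fb (q.obj d)).obj (dbar d)).1
  have hFo : ∀ d, (G ⋙ q).obj (Fo d) = q.obj d := fun d => ((Fb (q.obj d)).obj (dbar d)).2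
  let η : (d : D) → (d ⟶ G.obj (Fo d)) := fun d => ((adjb (q.obj d)).unit.app (dbar d)).1
  have hη : ∀ d, q.IsHomLift (𝟙 (q.obj d)) (η d) :=
    fun d => ((adjb (q.obj d)).unit.app (dbar d)).2
  have hqη : ∀ d, q.map (η d) = eqToHom (hFo d).symm := fun d => by
    haveI := hη d
    have := fac' q (𝟙 (q.obj d)) (η d)
    simpa using this
  -- cartesian lifts data
  have hdom : ∀ (y : E) (bb : B) (f : bb ⟶ (G ⋙ q).obj y), (G ⋙ q).obj (xF y bb f) = bb :=
    fun y bb f => by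
      haveI := hc y bb f
      exact domain_eq (G ⋙ q) f (φF y bb f)
  -- the unique fiberwise factorization of a morphism d ⟶ G.obj y through the cartesian lift
  have huniv : ∀ (d : D) (y : E) (ψ : d ⟶ G.obj y),
      ∃! χ : d ⟶ G.obj (xF y (q.obj d) (q.map ψ)),
        q.IsHomLift (𝟙 (q.obj d)) χ ∧ χ ≫ G.map (φF y (q.obj d) (q.map ψ)) = ψ :=
    fun d y ψ => by
      haveI := hpres _ _ (hc y (q.obj d) (q.map ψ))
      exact IsStronglyCartesian.universal_property q (q.map ψ)
        (G.map (φF y (q.obj d) (q.map ψ))) (𝟙 (q.obj d)) (q.map ψ) (by simp) ψ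
  let χm : ∀ (d : D) (y : E) (ψ : d ⟶ G.obj y), d ⟶ G.obj (xF y (q.obj d) (q.map ψ)) :=
    fun d y ψ => (huniv d y ψ).choose
  have hχlift : ∀ d y ψ, q.IsHomLift (𝟙 (q.obj d)) (χm d y ψ) :=
    fun d y ψ => (huniv d y ψ).choose_spec.1.1
  have hχfac : ∀ d y ψ, χm d y ψ ≫ G.map (φF y (q.obj d) (q.map ψ)) = ψ :=
    fun d y ψ => (huniv d y ψ).choose_spec.1.2
  have hχuniq : ∀ d y ψ (χ' : d ⟶ G.obj (xF y (q.obj d) (q.map ψ))),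
      q.IsHomLift (𝟙 (q.obj d)) χ' → χ' ≫ G.map (φF y (q.obj d) (q.map ψ)) = ψ →
        χ' = χm d y ψ :=
    fun d y ψ χ' h1 h2 => (huniv d y ψ).choose_spec.2 χ' ⟨h1, h2⟩
  -- the fiber objects of the cartesian lifts
  let xbar : ∀ (d : D) (y : E) (ψ : d ⟶ G.obj y), Fiber (G ⋙ q) (q.obj d) :=
    fun d y ψ => Fiber.mk (hdom y (q.obj d) (q.map ψ))
  -- the equivalence
  let e : ∀ (d : D) (y : E), (Fo d ⟶ y) ≃ (d ⟶ G.obj y) := fun d y =>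
    { toFun := fun ξ => η d ≫ G.map ξ
      invFun := fun ψ =>
        (((adjb (q.obj d)).homEquiv (dbar d) (xbar d y ψ)).symm
          ⟨χm d y ψ, hχlift d y ψ⟩).1 ≫ φF y (q.obj d) (q.map ψ)
      left_inv := fun ξ => by
        set ψ : d ⟶ G.obj y := η d ≫ G.map ξ with hψdef
        -- universal property in E
        have hf' : (G ⋙ q).map ξ = eqToHom (hFo d) ≫ q.map ψ := by
          rw [hψdef, q.map_comp, hqη d]
          simp
        haveI := hc y (q.obj d) (q.map ψ)
        obtain ⟨τ, ⟨hτl, hτfac⟩, hτuniq⟩ :=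
          IsStronglyCartesian.universal_property (G ⋙ q) (q.map ψ)
            (φF y (q.obj d) (q.map ψ)) (eqToHom (hFo d)) ((G ⋙ q).map ξ) hf' ξ
        -- compare in the fiber
        haveI := hτl
        have hτid : (G ⋙ q).IsHomLift (𝟙 (q.obj d)) τ :=
          lift_id_of_lift_eqToHom (G ⋙ q) (hFo d) τ
        let τbar : (Fb (q.obj d)).obj (dbar d) ⟶ xbar d y ψ := ⟨τ, hτid⟩
        have hkey : (adjb (q.obj d)).homEquiv (dbar d) (xbar d y ψ) τbar
            = ⟨χm d y ψ, hχlift d y ψ⟩ := by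
          apply Subtype.ext
          rw [Adjunction.homEquiv_unit]
          show η d ≫ G.map τ = χm d y ψ
          apply hχuniq
          · haveI := hη d
            haveI := hτid
            haveI := comp_lift_of_lift G q (𝟙 (q.obj d)) τ
            infer_instance
          · rw [Category.assoc, ← G.map_comp, hτfac]
        have hζ : ((adjb (q.obj d)).homEquiv (dbar d) (xbar d y ψ)).symm
            ⟨χm d y ψ, hχlift d y ψ⟩ = τbar := by
          rw [← hkey, Equiv.symm_apply_apply]
        show (((adjb (q.obj d)).homEquiv (dbar d) (xbar d y ψ)).symm
          ⟨χm d y ψ, hχlift d y ψ⟩).1 ≫ φF y (q.obj d) (q.map ψ) = ξ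
        rw [hζ]
        exact hτfac
      right_inv := fun ψ => by
        have h2 : ((adjb (q.obj d)).homEquiv (dbar d) (xbar d y ψ))
            (((adjb (q.obj d)).homEquiv (dbar d) (xbar d y ψ)).symm
              ⟨χm d y ψ, hχlift d y ψ⟩) = ⟨χm d y ψ, hχlift d y ψ⟩ :=
          Equiv.apply_symm_apply _ _
        rw [Adjunction.homEquiv_unit] at h2
        have h3 : η d ≫ G.map ((((adjb (q.obj d)).homEquiv (dbar d) (xbar d y ψ)).symm
            ⟨χm d y ψ, hχlift d y ψ⟩)).1 = χm d y ψ := congrArg Subtype.val h2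
        show η d ≫ G.map ((((adjb (q.obj d)).homEquiv (dbar d) (xbar d y ψ)).symm
            ⟨χm d y ψ, hχlift d y ψ⟩).1 ≫ φF y (q.obj d) (q.map ψ)) = ψ
        erw [G.map_comp]
        rw [← Category.assoc, h3]
        exact hχfac d y ψ }
  have he : ∀ (X : D) (Y Y' : E) (g : Y ⟶ Y') (h : Fo X ⟶ Y),
      e X Y' (h ≫ g) = e X Y h ≫ G.map g := by
    intro X Y Y' g h
    show η X ≫ G.map (h ≫ g) = (η X ≫ G.map h) ≫ G.map g
    rw [G.map_comp, Category.assoc]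
  refine ⟨Adjunction.leftAdjointOfEquiv e he, Adjunction.adjunctionOfEquivLeft e he,
    fun d => ?_⟩
  rw [Adjunction.adjunctionOfEquivLeft_unit_app]
  show IsIso (q.map (η d ≫ G.map (𝟙 (Fo d))))
  rw [G.map_id, Category.comp_id]
  haveI := hη d
  exact isIso_map_of_lift_id q (S := q.obj d) (η d)

end RelAdjAux

/-- Let `p : E ⥤ B` and `q : D ⥤ B` be Grothendieck fibrations, and let `G : E ⥤ D` be a
functor with `G ⋙ q = p`.  Then `G` admits a left adjoint `L` whose unit components are sent
by `q` to isomorphisms if and only if `G` sends strongly cartesian morphisms to strongly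
cartesian morphisms and, for every `b : B`, the induced functor on fibers `E_b ⥤ D_b` admits
a left adjoint. -/
theorem relative_left_adjoint_iff_fiberwise_and_cartesian
    (p : E ⥤ B) (q : D ⥤ B) (G : E ⥤ D) (hG : G ⋙ q = p)
    (hp : ∀ (y : E) (b : B) (f : b ⟶ p.obj y),
      ∃ (x : E) (φ : x ⟶ y), p.IsStronglyCartesian f φ)
    (hq : ∀ (y : D) (b : B) (f : b ⟶ q.obj y),
      ∃ (x : D) (φ : x ⟶ y), q.IsStronglyCartesian f φ) :
    (∃ (L : D ⥤ E) (adj : L ⊣ G), ∀ d : D, IsIso (q.map (adj.unit.app d))) ↔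
      ((∀ {x y : E} {a b : B} (f : a ⟶ b) (φ : x ⟶ y),
          p.IsStronglyCartesian f φ → q.IsStronglyCartesian f (G.map φ)) ∧
        ∀ b : B, (fiberFunctorOfEq G hG b).IsRightAdjoint) := by
  subst hG
  constructor
  · rintro ⟨L, adj, hiso⟩
    exact ⟨fun {x y a b} f φ hφ => RelAdjAux.preserves_cartesian q G L adj hiso f φ hφ,
      fun b => RelAdjAux.fiber_isRightAdjoint q G hp L adj hiso b⟩
  · rintro ⟨hpres, hfib⟩
    exact RelAdjAux.exists_left_adjoint q G hp @hpres hfib
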